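/- Let ρ₀ and ρ₁ be density matrices with ρ₀ positive definite. Define ψ(r) = log Tr(ρ₁^{1+r} ρ₀^{-r}) for r ∈ [0,1]. Then ψ(0) = 0, ψ is differentiable on [0,1], and ψ'(0) = D(ρ₁‖ρ₀) = Tr(ρ₁(log ρ₁ − log ρ₀)). Moreover ψ'(r) = Tr(ρ₀^{-r} ρ₁^{1+r}(log ρ₁ − log ρ₀)) / Tr(ρ₁^{1+r} ρ₀^{-r}). -/

import Mathlib

open Matrix
open scoped ComplexOrder

variable {d : Type*} [Fintype d] [DecidableEq d]

open Classical in
/-- Functional calculus for Hermitian matrices: apply `f` to the eigenvalues.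
Returns `0` if the matrix is not Hermitian. -/
noncomputable def mfun (f : ℝ → ℝ) (A : Matrix d d ℂ) : Matrix d d ℂ :=
  if hA : A.IsHermitian then
    (hA.eigenvectorUnitary : Matrix d d ℂ) *
      Matrix.diagonal (fun i => (f (hA.eigenvalues i) : ℂ)) *
      star (hA.eigenvectorUnitary : Matrix d d ℂ)
  else 0

/-- Matrix logarithm on the support (eigenvalues `≤ 0` are mapped to `0`). -/
noncomputable def logm (A : Matrix d d ℂ) : Matrix d d ℂ :=
  mfun (fun x => if x ≤ 0 then 0 else Real.log x) A

/-- Matrix real power on the support (eigenvalues `≤ 0` are mapped to `0`). -/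
noncomputable def powm (A : Matrix d d ℂ) (p : ℝ) : Matrix d d ℂ :=
  mfun (fun x => if x ≤ 0 then 0 else x ^ p) A

/-- Quantum relative entropy `D(ρ‖σ) = Tr(ρ (log ρ − log σ))` (natural log). -/
noncomputable def qRelEnt (ρ σ : Matrix d d ℂ) : ℝ :=
  ((ρ * (logm ρ - logm σ)).trace).re

/-- The support of `ρ` is contained in the support of `σ` (kernel containment,
equivalent to range containment for Hermitian matrices). -/
def SuppSubset (ρ σ : Matrix d d ℂ) : Prop :=
  ∀ v : d → ℂ, σ.mulVec v = 0 → ρ.mulVec v = 0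

/-- Trace norm of a Hermitian matrix: `Tr |A|`. -/
noncomputable def traceNorm (A : Matrix d d ℂ) : ℝ :=
  ((mfun (fun x => |x|) A).trace).re

lemma mfun_eq {A : Matrix d d ℂ} (hA : A.IsHermitian) (f : ℝ → ℝ) :
    mfun f A = (hA.eigenvectorUnitary : Matrix d d ℂ) *
      Matrix.diagonal (fun i => (f (hA.eigenvalues i) : ℂ)) *
      star (hA.eigenvectorUnitary : Matrix d d ℂ) := by
  simp only [mfun, dif_pos hA]

lemma star_mul_self_eigen {A : Matrix d d ℂ} (hA : A.IsHermitian) :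
    star (hA.eigenvectorUnitary : Matrix d d ℂ) * (hA.eigenvectorUnitary : Matrix d d ℂ) = 1 :=
  Matrix.mem_unitaryGroup_iff'.mp hA.eigenvectorUnitary.2

lemma trace_mfun {A : Matrix d d ℂ} (hA : A.IsHermitian) (f : ℝ → ℝ) :
    (mfun f A).trace = ((∑ i, f (hA.eigenvalues i) : ℝ) : ℂ) := by
  rw [mfun_eq hA, Matrix.trace_mul_cycle, star_mul_self_eigen hA, one_mul,
    Matrix.trace_diagonal]
  push_cast
  rfl

lemma row_normSq {u : Matrix d d ℂ} (hu : u ∈ Matrix.unitaryGroup d ℂ) (i : d) :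
    ∑ j, Complex.normSq (u i j) = 1 := by
  have h := Matrix.mem_unitaryGroup_iff.mp hu
  have h2 := congrFun (congrFun (congrArg (fun M : Matrix d d ℂ => (M : Matrix d d ℂ)) h) i) i
  simp only [Matrix.mul_apply, Matrix.star_apply, Matrix.one_apply_eq] at h2
  have : ((∑ j, Complex.normSq (u i j) : ℝ) : ℂ) = 1 := by
    push_cast
    rw [← h2]
    exact Finset.sum_congr rfl fun j _ => (Complex.mul_conj (u i j)).symm
  exact_mod_cast this

lemma mfun_mul_mfun {A : Matrix d d ℂ} (hA : A.IsHermitian) (f g : ℝ → ℝ) :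
    mfun f A * mfun g A = mfun (fun x => f x * g x) A := by
  rw [mfun_eq hA f, mfun_eq hA g, mfun_eq hA]
  simp only [mul_assoc]
  rw [← mul_assoc (star _) ((hA.eigenvectorUnitary : Matrix d d ℂ)), star_mul_self_eigen hA,
    one_mul, ← mul_assoc (Matrix.diagonal _), Matrix.diagonal_mul_diagonal]
  push_cast
  rfl

lemma eq_mfun_id {A : Matrix d d ℂ} (hA : A.IsHermitian) : A = mfun (fun x => x) A := by
  rw [mfun_eq hA]
  exact hA.spectral_theorem

lemma trace_mfun_mul {A B : Matrix d d ℂ} (hA : A.IsHermitian) (hB : B.IsHermitian)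
    (f g : ℝ → ℝ) :
    (mfun f A * mfun g B).trace =
      ((∑ i, ∑ j, f (hA.eigenvalues i) * g (hB.eigenvalues j) *
        Complex.normSq ((star (hA.eigenvectorUnitary : Matrix d d ℂ) *
          (hB.eigenvectorUnitary : Matrix d d ℂ)) i j) : ℝ) : ℂ) := by
  set U := (hA.eigenvectorUnitary : Matrix d d ℂ) with hU
  set V := (hB.eigenvectorUnitary : Matrix d d ℂ) with hV
  set W := star U * V with hW
  set Df := Matrix.diagonal (fun i => (f (hA.eigenvalues i) : ℂ)) with hDf
  set Dg := Matrix.diagonal (fun j => (g (hB.eigenvalues j) : ℂ)) with hDg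
  have e1 : mfun f A * mfun g B = U * (Df * (W * (Dg * star V))) := by
    rw [mfun_eq hA, mfun_eq hB, hW]
    simp only [mul_assoc]
    rfl
  rw [e1, Matrix.trace_mul_comm]
  have e2 : (Df * (W * (Dg * star V))) * U = Df * (W * (Dg * star W)) := by
    rw [hW, Matrix.star_mul, star_star]
    simp only [mul_assoc]
  rw [e2, Matrix.trace]
  push_cast
  apply Finset.sum_congr rfl
  intro i _
  simp only [Matrix.diag_apply, hDf, hDg, Matrix.mul_apply, Matrix.diagonal_apply,
    Matrix.star_apply, ite_mul, zero_mul, Finset.sum_ite_eq, Finset.mem_univ, if_true]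
  rw [Finset.mul_sum]
  apply Finset.sum_congr rfl
  intro j _
  rw [show star (W i j) = (starRingEnd ℂ) (W i j) from rfl]
  rw [show W i j * (↑(g (hB.eigenvalues j)) * (starRingEnd ℂ) (W i j))
      = ↑(g (hB.eigenvalues j)) * (W i j * (starRingEnd ℂ) (W i j)) by ring,
    Complex.mul_conj]
  push_cast
  ring

-- abstract sum lemmas
lemma aux_term_nonneg (μv lv cv r : ℝ) (hl : 0 < lv) (hc : 0 ≤ cv) :
    0 ≤ (if μv ≤ 0 then 0 else μv ^ (1+r)) * lv ^ (-r) * cv := by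
  apply mul_nonneg (mul_nonneg ?_ (Real.rpow_nonneg hl.le _)) hc
  split
  · exact le_refl 0
  · exact Real.rpow_nonneg (le_of_not_ge (by assumption)) _

lemma aux_F_pos (μ lam : d → ℝ) (c : d → d → ℝ) (hlam : ∀ j, 0 < lam j)
    (hc0 : ∀ i j, 0 ≤ c i j) (hcsum : ∀ i, ∑ j, c i j = 1) (hμsum : ∑ i, μ i = 1) (r : ℝ) :
    0 < ∑ i, ∑ j, (if μ i ≤ 0 then 0 else μ i ^ (1+r)) * lam j ^ (-r) * c i j := by
  obtain ⟨i0, hi0⟩ : ∃ i, 0 < μ i := by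
    by_contra hcon
    push_neg at hcon
    have : (∑ i, μ i) ≤ 0 := Finset.sum_nonpos fun i _ => hcon i
    rw [hμsum] at this; linarith
  obtain ⟨j0, hj0⟩ : ∃ j, 0 < c i0 j := by
    by_contra hcon
    push_neg at hcon
    have : (∑ j, c i0 j) ≤ 0 := Finset.sum_nonpos fun j _ => hcon j
    rw [hcsum i0] at this; linarith
  refine Finset.sum_pos'
    (fun i _ => Finset.sum_nonneg fun j _ => aux_term_nonneg _ _ _ _ (hlam j) (hc0 i j))
    ⟨i0, Finset.mem_univ _, Finset.sum_pos'
      (fun j _ => aux_term_nonneg _ _ _ _ (hlam j) (hc0 i0 j))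
      ⟨j0, Finset.mem_univ _, ?_⟩⟩
  rw [if_neg (not_le.2 hi0)]
  exact mul_pos (mul_pos (Real.rpow_pos_of_pos hi0 _) (Real.rpow_pos_of_pos (hlam j0) _)) hj0

lemma aux_deriv (μ lam : d → ℝ) (c : d → d → ℝ) (hlam : ∀ j, 0 < lam j) (r : ℝ) :
    HasDerivAt (fun r : ℝ => ∑ i, ∑ j, (if μ i ≤ 0 then 0 else μ i ^ (1+r)) * lam j ^ (-r) * c i j)
      (∑ i, ∑ j, (if μ i ≤ 0 then 0 else μ i ^ (1+r) * (Real.log (μ i) - Real.log (lam j))) *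
        lam j ^ (-r) * c i j) r := by
  apply HasDerivAt.fun_sum
  intro i _
  apply HasDerivAt.fun_sum
  intro j _
  by_cases hi : μ i ≤ 0
  · simp only [if_pos hi, zero_mul]
    exact hasDerivAt_const _ 0
  · have hμi : 0 < μ i := not_le.1 hi
    simp only [if_neg hi]
    have h1 : HasDerivAt (fun s : ℝ => μ i ^ (1+s)) (μ i ^ (1+r) * Real.log (μ i)) r := by
      have h := (Real.hasStrictDerivAt_const_rpow hμi (1+r)).hasDerivAt
      have hc : HasDerivAt (fun s : ℝ => 1 + s) 1 r := (hasDerivAt_id r).const_add 1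
      simpa [Function.comp_def] using h.comp r hc
    have h2 : HasDerivAt (fun s : ℝ => lam j ^ (-s)) (-(lam j ^ (-r) * Real.log (lam j))) r := by
      have h := (Real.hasStrictDerivAt_const_rpow (hlam j) (-r)).hasDerivAt
      have hc : HasDerivAt (fun s : ℝ => -s) (-1) r := (hasDerivAt_id r).neg
      simpa [Function.comp_def] using h.comp r hc
    have h3 := (h1.fun_mul h2).mul_const (c i j)
    exact h3.congr_deriv (by ring)

lemma aux_F0 (μ lam : d → ℝ) (c : d → d → ℝ) (hμ0 : ∀ i, 0 ≤ μ i)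
    (hcsum : ∀ i, ∑ j, c i j = 1) (hμsum : ∑ i, μ i = 1) :
    ∑ i, ∑ j, (if μ i ≤ 0 then 0 else μ i ^ (1+(0:ℝ))) * lam j ^ (-(0:ℝ)) * c i j = 1 := by
  have hterm : ∀ i j, (if μ i ≤ 0 then 0 else μ i ^ (1+(0:ℝ))) * lam j ^ (-(0:ℝ)) * c i j
      = μ i * c i j := by
    intro i j
    rw [neg_zero, Real.rpow_zero, mul_one]
    by_cases hi : μ i ≤ 0
    · rw [if_pos hi, le_antisymm hi (hμ0 i)]
    · rw [if_neg hi]; norm_num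
  calc ∑ i, ∑ j, (if μ i ≤ 0 then 0 else μ i ^ (1+(0:ℝ))) * lam j ^ (-(0:ℝ)) * c i j
      = ∑ i, ∑ j, μ i * c i j :=
        Finset.sum_congr rfl fun i _ => Finset.sum_congr rfl fun j _ => hterm i j
    _ = ∑ i, μ i := Finset.sum_congr rfl fun i _ => by rw [← Finset.mul_sum, hcsum i, mul_one]
    _ = 1 := hμsum

lemma aux_N0 (μ lam : d → ℝ) (c : d → d → ℝ) (hμ0 : ∀ i, 0 ≤ μ i) (hlam : ∀ j, 0 < lam j)
    (hcsum : ∀ i, ∑ j, c i j = 1) :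
    ∑ i, ∑ j, (if μ i ≤ 0 then 0 else μ i ^ (1+(0:ℝ)) * (Real.log (μ i) - Real.log (lam j))) *
        lam j ^ (-(0:ℝ)) * c i j
      = (∑ i, μ i * (if μ i ≤ 0 then 0 else Real.log (μ i)))
        - ∑ i, ∑ j, μ i * (if lam j ≤ 0 then 0 else Real.log (lam j)) * c i j := by
  have hterm : ∀ i j, (if μ i ≤ 0 then 0 else μ i ^ (1+(0:ℝ)) * (Real.log (μ i) - Real.log (lam j))) *
        lam j ^ (-(0:ℝ)) * c i j
      = μ i * (if μ i ≤ 0 then 0 else Real.log (μ i)) * c i j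
        - μ i * (if lam j ≤ 0 then 0 else Real.log (lam j)) * c i j := by
    intro i j
    rw [neg_zero, Real.rpow_zero, mul_one, if_neg (not_le.2 (hlam j))]
    by_cases hi : μ i ≤ 0
    · rw [if_pos hi, if_pos hi, le_antisymm hi (hμ0 i)]; ring
    · rw [if_neg hi, if_neg hi]; norm_num; ring
  calc ∑ i, ∑ j, (if μ i ≤ 0 then 0 else μ i ^ (1+(0:ℝ)) * (Real.log (μ i) - Real.log (lam j))) *
        lam j ^ (-(0:ℝ)) * c i j
      = ∑ i, ∑ j, (μ i * (if μ i ≤ 0 then 0 else Real.log (μ i)) * c i j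
          - μ i * (if lam j ≤ 0 then 0 else Real.log (lam j)) * c i j) :=
        Finset.sum_congr rfl fun i _ => Finset.sum_congr rfl fun j _ => hterm i j
    _ = (∑ i, ∑ j, μ i * (if μ i ≤ 0 then 0 else Real.log (μ i)) * c i j)
        - ∑ i, ∑ j, μ i * (if lam j ≤ 0 then 0 else Real.log (lam j)) * c i j := by
        simp only [Finset.sum_sub_distrib]
    _ = (∑ i, μ i * (if μ i ≤ 0 then 0 else Real.log (μ i)))
        - ∑ i, ∑ j, μ i * (if lam j ≤ 0 then 0 else Real.log (lam j)) * c i j := by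
        congr 1
        exact Finset.sum_congr rfl fun i _ => by rw [← Finset.mul_sum, hcsum i, mul_one]

/-- For density matrices `ρ₀` (positive definite) and `ρ₁`, the function
`ψ(r) = log Tr(ρ₁^{1+r} ρ₀^{-r})` satisfies `ψ(0) = 0`, is differentiable on `[0,1]` with
`ψ'(r) = Tr(ρ₀^{-r} ρ₁^{1+r}(log ρ₁ − log ρ₀)) / Tr(ρ₁^{1+r} ρ₀^{-r})`,
and `ψ'(0) = D(ρ₁‖ρ₀)`. -/
theorem deriv_renyi_like_psi (ρ₀ ρ₁ : Matrix d d ℂ)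
    (h₀ : ρ₀.PosDef) (h₀1 : ρ₀.trace = 1)
    (h₁ : ρ₁.PosSemidef) (h₁1 : ρ₁.trace = 1) :
    (fun r : ℝ => Real.log (((powm ρ₁ (1 + r) * powm ρ₀ (-r)).trace).re)) 0 = 0 ∧
    (∀ r ∈ Set.Icc (0 : ℝ) 1,
      HasDerivAt (fun r : ℝ => Real.log (((powm ρ₁ (1 + r) * powm ρ₀ (-r)).trace).re))
        (((powm ρ₀ (-r) * powm ρ₁ (1 + r) * (logm ρ₁ - logm ρ₀)).trace).re /
          ((powm ρ₁ (1 + r) * powm ρ₀ (-r)).trace).re) r) ∧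
    ((powm ρ₀ (-(0 : ℝ)) * powm ρ₁ (1 + 0) * (logm ρ₁ - logm ρ₀)).trace).re /
        ((powm ρ₁ ((1 : ℝ) + 0) * powm ρ₀ (-(0 : ℝ))).trace).re
      = qRelEnt ρ₁ ρ₀ := by
  have hA : ρ₁.IsHermitian := h₁.1
  have hB : ρ₀.IsHermitian := h₀.1
  have hWmem : star (hA.eigenvectorUnitary : Matrix d d ℂ) *
      (hB.eigenvectorUnitary : Matrix d d ℂ) ∈ Matrix.unitaryGroup d ℂ :=
    mul_mem (Unitary.star_mem hA.eigenvectorUnitary.2) hB.eigenvectorUnitary.2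
  have hc0 : ∀ i j : d, 0 ≤ Complex.normSq ((star (hA.eigenvectorUnitary : Matrix d d ℂ) *
      (hB.eigenvectorUnitary : Matrix d d ℂ)) i j) := fun i j => Complex.normSq_nonneg _
  have hcsum : ∀ i : d, ∑ j, Complex.normSq ((star (hA.eigenvectorUnitary : Matrix d d ℂ) *
      (hB.eigenvectorUnitary : Matrix d d ℂ)) i j) = 1 := fun i => row_normSq hWmem i
  have hμ0 : ∀ i, 0 ≤ hA.eigenvalues i := fun i => h₁.eigenvalues_nonneg i
  have hlam0 : ∀ j, 0 < hB.eigenvalues j := fun j => h₀.eigenvalues_pos j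
  have hμsum : ∑ i, hA.eigenvalues i = 1 := by
    have h := trace_mfun hA (fun x => x)
    rw [← eq_mfun_id hA, h₁1] at h
    exact_mod_cast h.symm
  -- trace of the denominator as a real double sum
  have hFtr : ∀ r : ℝ, ((powm ρ₁ (1+r) * powm ρ₀ (-r)).trace).re
      = ∑ i, ∑ j, (if hA.eigenvalues i ≤ 0 then 0 else hA.eigenvalues i ^ (1+r)) *
          hB.eigenvalues j ^ (-r) *
          Complex.normSq ((star (hA.eigenvectorUnitary : Matrix d d ℂ) *
            (hB.eigenvectorUnitary : Matrix d d ℂ)) i j) := by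
    intro r
    rw [show powm ρ₁ (1+r) = mfun (fun x => if x ≤ 0 then 0 else x ^ (1+r)) ρ₁ from rfl,
        show powm ρ₀ (-r) = mfun (fun x => if x ≤ 0 then 0 else x ^ (-r)) ρ₀ from rfl,
        trace_mfun_mul hA hB, Complex.ofReal_re]
    exact Finset.sum_congr rfl fun i _ => Finset.sum_congr rfl fun j _ => by
      rw [if_neg (not_le.2 (hlam0 j))]
  -- trace of the numerator as a real double sum
  have hNtr : ∀ r : ℝ, ((powm ρ₀ (-r) * powm ρ₁ (1+r) * (logm ρ₁ - logm ρ₀)).trace).re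
      = ∑ i, ∑ j, (if hA.eigenvalues i ≤ 0 then 0 else
            hA.eigenvalues i ^ (1+r) * (Real.log (hA.eigenvalues i) - Real.log (hB.eigenvalues j))) *
          hB.eigenvalues j ^ (-r) *
          Complex.normSq ((star (hA.eigenvectorUnitary : Matrix d d ℂ) *
            (hB.eigenvectorUnitary : Matrix d d ℂ)) i j) := by
    intro r
    have t1 : ((powm ρ₀ (-r) * powm ρ₁ (1+r) * logm ρ₁).trace)
        = ((∑ i, ∑ j, ((if hA.eigenvalues i ≤ 0 then 0 else hA.eigenvalues i ^ (1+r)) *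
            (if hA.eigenvalues i ≤ 0 then 0 else Real.log (hA.eigenvalues i))) *
          (if hB.eigenvalues j ≤ 0 then 0 else hB.eigenvalues j ^ (-r)) *
          Complex.normSq ((star (hA.eigenvectorUnitary : Matrix d d ℂ) *
            (hB.eigenvectorUnitary : Matrix d d ℂ)) i j) : ℝ) : ℂ) := by
      rw [mul_assoc, Matrix.trace_mul_comm,
        show powm ρ₁ (1+r) * logm ρ₁ = mfun (fun x => (if x ≤ 0 then 0 else x ^ (1+r)) *
          (if x ≤ 0 then 0 else Real.log x)) ρ₁ from mfun_mul_mfun hA _ _,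
        show powm ρ₀ (-r) = mfun (fun x => if x ≤ 0 then 0 else x ^ (-r)) ρ₀ from rfl,
        trace_mfun_mul hA hB]
    have t2 : ((powm ρ₀ (-r) * powm ρ₁ (1+r) * logm ρ₀).trace)
        = ((∑ i, ∑ j, (if hA.eigenvalues i ≤ 0 then 0 else hA.eigenvalues i ^ (1+r)) *
          ((if hB.eigenvalues j ≤ 0 then 0 else Real.log (hB.eigenvalues j)) *
            (if hB.eigenvalues j ≤ 0 then 0 else hB.eigenvalues j ^ (-r))) *
          Complex.normSq ((star (hA.eigenvectorUnitary : Matrix d d ℂ) *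
            (hB.eigenvectorUnitary : Matrix d d ℂ)) i j) : ℝ) : ℂ) := by
      rw [Matrix.trace_mul_cycle, Matrix.trace_mul_comm,
        show logm ρ₀ * powm ρ₀ (-r) = mfun (fun x => (if x ≤ 0 then 0 else Real.log x) *
          (if x ≤ 0 then 0 else x ^ (-r))) ρ₀ from mfun_mul_mfun hB _ _,
        show powm ρ₁ (1+r) = mfun (fun x => if x ≤ 0 then 0 else x ^ (1+r)) ρ₁ from rfl,
        trace_mfun_mul hA hB]
    rw [mul_sub, Matrix.trace_sub, Complex.sub_re, t1, t2, Complex.ofReal_re, Complex.ofReal_re,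
      ← Finset.sum_sub_distrib]
    refine Finset.sum_congr rfl fun i _ => ?_
    rw [← Finset.sum_sub_distrib]
    refine Finset.sum_congr rfl fun j _ => ?_
    by_cases hi : hA.eigenvalues i ≤ 0
    · simp [if_pos hi]
    · simp only [if_neg hi, if_neg (not_le.2 (hlam0 j))]
      ring
  refine ⟨?_, ?_, ?_⟩
  · show Real.log (((powm ρ₁ (1 + 0) * powm ρ₀ (-(0:ℝ))).trace).re) = 0
    rw [hFtr 0, aux_F0 _ _ _ hμ0 hcsum hμsum, Real.log_one]
  · intro r _
    have hfun : (fun r : ℝ => Real.log (((powm ρ₁ (1 + r) * powm ρ₀ (-r)).trace).re))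
        = (fun r : ℝ => Real.log (∑ i, ∑ j,
            (if hA.eigenvalues i ≤ 0 then 0 else hA.eigenvalues i ^ (1+r)) *
            hB.eigenvalues j ^ (-r) *
            Complex.normSq ((star (hA.eigenvectorUnitary : Matrix d d ℂ) *
              (hB.eigenvectorUnitary : Matrix d d ℂ)) i j))) :=
      funext fun r => by rw [hFtr r]
    rw [hfun, hNtr r, hFtr r]
    exact (aux_deriv _ _ _ hlam0 r).log
      (aux_F_pos _ _ _ hlam0 hc0 hcsum hμsum r).ne'
  · rw [hNtr 0, hFtr 0, aux_F0 _ _ _ hμ0 hcsum hμsum, div_one,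
      aux_N0 _ _ _ hμ0 hlam0 hcsum]
    -- now show the explicit sums equal qRelEnt ρ₁ ρ₀
    have e1 : (ρ₁ * logm ρ₁).trace
        = ((∑ i, hA.eigenvalues i * (if hA.eigenvalues i ≤ 0 then 0
            else Real.log (hA.eigenvalues i)) : ℝ) : ℂ) := by
      rw [show ρ₁ * logm ρ₁ = mfun (fun x => x) ρ₁ *
          mfun (fun x => if x ≤ 0 then 0 else Real.log x) ρ₁ from by rw [← eq_mfun_id hA]; rfl,
        mfun_mul_mfun hA, trace_mfun hA]
    have e2 : (ρ₁ * logm ρ₀).trace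
        = ((∑ i, ∑ j, hA.eigenvalues i * (if hB.eigenvalues j ≤ 0 then 0
            else Real.log (hB.eigenvalues j)) *
          Complex.normSq ((star (hA.eigenvectorUnitary : Matrix d d ℂ) *
            (hB.eigenvectorUnitary : Matrix d d ℂ)) i j) : ℝ) : ℂ) := by
      rw [show ρ₁ * logm ρ₀ = mfun (fun x => x) ρ₁ *
          mfun (fun x => if x ≤ 0 then 0 else Real.log x) ρ₀ from by rw [← eq_mfun_id hA]; rfl,
        trace_mfun_mul hA hB]
    rw [qRelEnt, mul_sub, Matrix.trace_sub, Complex.sub_re, e1, e2,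
      Complex.ofReal_re, Complex.ofReal_re]
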